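/- Let d ≥ 0 be a real number and let G be a finite simple graph on n ≥ 1 vertices with average degree at most d. Then the average energy of G equals √d if and only if either G has no edges and d = 0, or G is a perfect matching (every vertex has degree exactly 1) and d = 1. -/

import Mathlib

open Polynomial Matrix Finset

lemma my_charmatrix_diagonal {m : ℕ} (v : Fin m → ℝ) :
    charmatrix (diagonal v) = diagonal (fun i => (X : ℝ[X]) - C (v i)) := by
  ext i j
  by_cases h : i = j
  · subst h; simp
  · simp [h, charmatrix_apply_ne _ _ _ h, diagonal_apply_ne _ h]

lemma my_charpoly_herm {m : ℕ} (A : Matrix (Fin m) (Fin m) ℝ) (hA : A.IsHermitian) :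
    A.charpoly = ∏ i, (X - C (hA.eigenvalues i)) := by
  set U : Matrix (Fin m) (Fin m) ℝ := (Matrix.IsHermitian.eigenvectorUnitary hA : Matrix (Fin m) (Fin m) ℝ) with hU
  have hU1 : star U * U = 1 := Matrix.mem_unitaryGroup_iff'.mp (Matrix.IsHermitian.eigenvectorUnitary hA).2
  have hU2 : U * star U = 1 := Matrix.mem_unitaryGroup_iff.mp (Matrix.IsHermitian.eigenvectorUnitary hA).2
  have hof : (RCLike.ofReal ∘ hA.eigenvalues : Fin m → ℝ) = hA.eigenvalues := by
    funext i; simp [RCLike.ofReal_real_eq_id]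
  have hspec : A = U * diagonal hA.eigenvalues * star U := by
    conv_lhs => rw [hA.spectral_theorem]
    rw [hof, Unitary.conjStarAlgAut_apply]
  set φ : Matrix (Fin m) (Fin m) ℝ →+* Matrix (Fin m) (Fin m) ℝ[X] :=
    (C : ℝ →+* ℝ[X]).mapMatrix with hφ
  have hcm : charmatrix A = φ U * charmatrix (diagonal hA.eigenvalues) * φ (star U) := by
    rw [charmatrix, charmatrix]
    rw [mul_sub, sub_mul]
    have h1 : φ U * Matrix.scalar (Fin m) (X : ℝ[X]) * φ (star U) = Matrix.scalar (Fin m) (X : ℝ[X]) := by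
      rw [(Matrix.scalar_commute (X : ℝ[X]) (fun r => Commute.all _ _) (φ U)).symm.eq]
      rw [mul_assoc, ← _root_.map_mul, hU2, _root_.map_one, mul_one]
    have h2 : φ U * (C : ℝ →+* ℝ[X]).mapMatrix (diagonal hA.eigenvalues) * φ (star U)
        = (C : ℝ →+* ℝ[X]).mapMatrix A := by
      rw [hφ, ← _root_.map_mul, ← _root_.map_mul, ← hspec]
    rw [h1, h2]
  have hdet : A.charpoly = (charmatrix (diagonal hA.eigenvalues)).det := by
    rw [Matrix.charpoly, hcm, det_mul, det_mul]
    have : (φ U).det * (φ (star U)).det = 1 := by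
      rw [← det_mul, ← _root_.map_mul, hU2, _root_.map_one, det_one]
    calc (φ U).det * (charmatrix (diagonal hA.eigenvalues)).det * (φ (star U)).det
        = (charmatrix (diagonal hA.eigenvalues)).det * ((φ U).det * (φ (star U)).det) := by ring
      _ = _ := by rw [this, mul_one]
  rw [hdet, my_charmatrix_diagonal, det_diagonal]

lemma my_multiset_eq {m : ℕ} (f g : Fin m → ℝ)
    (h : ∏ i, ((X : ℝ[X]) - C (f i)) = ∏ i, ((X : ℝ[X]) - C (g i))) :
    (Finset.univ.val.map f) = (Finset.univ.val.map g) := by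
  have hf : ∏ i, ((X : ℝ[X]) - C (f i))
      = ((Finset.univ.val.map f).map (fun a => (X : ℝ[X]) - C a)).prod := by
    rw [Multiset.map_map]; rfl
  have hg : ∏ i, ((X : ℝ[X]) - C (g i))
      = ((Finset.univ.val.map g).map (fun a => (X : ℝ[X]) - C a)).prod := by
    rw [Multiset.map_map]; rfl
  calc Finset.univ.val.map f
      = ((Finset.univ.val.map f).map (fun a => (X : ℝ[X]) - C a)).prod.roots :=
        (roots_multiset_prod_X_sub_C _).symm
    _ = ((Finset.univ.val.map g).map (fun a => (X : ℝ[X]) - C a)).prod.roots := by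
        rw [← hf, ← hg, h]
    _ = Finset.univ.val.map g := roots_multiset_prod_X_sub_C _

lemma my_sum_transfer {m : ℕ} (f g : Fin m → ℝ)
    (h : Finset.univ.val.map f = Finset.univ.val.map g) (F : ℝ → ℝ) :
    ∑ i, F (f i) = ∑ i, F (g i) := by
  have := congrArg (fun s : Multiset ℝ => (s.map F).sum) h
  simpa [Multiset.map_map, Finset.sum, Function.comp_def] using this

lemma my_mul_self_eq {m : ℕ} (A : Matrix (Fin m) (Fin m) ℝ) (hA : A.IsHermitian) :
    A * A = (Matrix.IsHermitian.eigenvectorUnitary hA : Matrix (Fin m) (Fin m) ℝ)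
      * diagonal (fun i => hA.eigenvalues i ^ 2)
      * star (Matrix.IsHermitian.eigenvectorUnitary hA : Matrix (Fin m) (Fin m) ℝ) := by
  set U : Matrix (Fin m) (Fin m) ℝ := (Matrix.IsHermitian.eigenvectorUnitary hA : Matrix (Fin m) (Fin m) ℝ) with hU
  have hU1 : star U * U = 1 := Matrix.mem_unitaryGroup_iff'.mp (Matrix.IsHermitian.eigenvectorUnitary hA).2
  have hof : (RCLike.ofReal ∘ hA.eigenvalues : Fin m → ℝ) = hA.eigenvalues := by
    funext i; simp [RCLike.ofReal_real_eq_id]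
  have hspec : A = U * diagonal hA.eigenvalues * star U := by
    conv_lhs => rw [hA.spectral_theorem]
    rw [hof, Unitary.conjStarAlgAut_apply]
  have e1 : U * diagonal hA.eigenvalues * star U * (U * diagonal hA.eigenvalues * star U)
      = U * (diagonal hA.eigenvalues * diagonal hA.eigenvalues) * star U := by
    calc U * diagonal hA.eigenvalues * star U * (U * diagonal hA.eigenvalues * star U)
        = U * diagonal hA.eigenvalues * (star U * U) * diagonal hA.eigenvalues * star U := by
          simp only [mul_assoc]
      _ = U * (diagonal hA.eigenvalues * diagonal hA.eigenvalues) * star U := by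
          rw [hU1, mul_one]; simp only [mul_assoc]
  have e2 : (fun i => hA.eigenvalues i * hA.eigenvalues i) = fun i => hA.eigenvalues i ^ 2 := by
    funext i; ring
  conv_lhs => rw [hspec]
  rw [e1, diagonal_mul_diagonal, e2]

lemma my_trace_eq {m : ℕ} (A : Matrix (Fin m) (Fin m) ℝ) (hA : A.IsHermitian) :
    Matrix.trace (A * A) = ∑ i, hA.eigenvalues i ^ 2 := by
  set U : Matrix (Fin m) (Fin m) ℝ := (Matrix.IsHermitian.eigenvectorUnitary hA : Matrix (Fin m) (Fin m) ℝ) with hU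
  have hU1 : star U * U = 1 := Matrix.mem_unitaryGroup_iff'.mp (Matrix.IsHermitian.eigenvectorUnitary hA).2
  rw [my_mul_self_eq A hA, Matrix.trace_mul_cycle, ← hU, hU1, one_mul, Matrix.trace_diagonal]

lemma my_sq_one_of_mul_self_eq_one {m : ℕ} (A : Matrix (Fin m) (Fin m) ℝ) (hA : A.IsHermitian)
    (h : A * A = 1) (i : Fin m) : hA.eigenvalues i ^ 2 = 1 := by
  set U : Matrix (Fin m) (Fin m) ℝ := (Matrix.IsHermitian.eigenvectorUnitary hA : Matrix (Fin m) (Fin m) ℝ) with hU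
  have hU1 : star U * U = 1 := Matrix.mem_unitaryGroup_iff'.mp (Matrix.IsHermitian.eigenvectorUnitary hA).2
  have h2 : diagonal (fun i => hA.eigenvalues i ^ 2) = 1 := by
    have := my_mul_self_eq A hA
    rw [h] at this
    calc diagonal (fun i => hA.eigenvalues i ^ 2)
        = (star U * U) * diagonal (fun i => hA.eigenvalues i ^ 2) * (star U * U) := by
          rw [hU1, one_mul, mul_one]
      _ = star U * (U * diagonal (fun i => hA.eigenvalues i ^ 2) * star U) * U := by
          simp only [mul_assoc]
      _ = star U * (1 : Matrix (Fin m) (Fin m) ℝ) * U := by rw [← this]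
      _ = 1 := by rw [mul_one, hU1]
  have := congrArg (fun M : Matrix (Fin m) (Fin m) ℝ => M i i) h2
  simpa using this

lemma my_mul_self_eq_smul_one {m : ℕ} (A : Matrix (Fin m) (Fin m) ℝ) (hA : A.IsHermitian)
    (d : ℝ) (h : ∀ i, hA.eigenvalues i ^ 2 = d) : A * A = d • 1 := by
  set U : Matrix (Fin m) (Fin m) ℝ := (Matrix.IsHermitian.eigenvectorUnitary hA : Matrix (Fin m) (Fin m) ℝ) with hU
  have hU2 : U * star U = 1 := Matrix.mem_unitaryGroup_iff.mp (Matrix.IsHermitian.eigenvectorUnitary hA).2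
  rw [my_mul_self_eq A hA, ← hU]
  have : diagonal (fun i => hA.eigenvalues i ^ 2) = d • (1 : Matrix (Fin m) (Fin m) ℝ) := by
    ext i j
    by_cases hij : i = j
    · subst hij; simp [h i]
    · simp [diagonal_apply_ne _ hij, Matrix.one_apply_ne hij]
  rw [this, mul_smul_comm, smul_mul_assoc, mul_one, hU2]

/-- **equality in McClelland's bound.** Let `d ≥ 0` be real and let `G` be a
finite simple graph on `n ≥ 1` vertices with average degree at most `d`.  Then the average
energy of `G` equals `√d` if and only if either `G` has no edges and `d = 0`, or `G` is a
perfect matching (every vertex has degree exactly `1`) and `d = 1`.  Here `μ : Fin n → ℝ`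
lists the eigenvalues of the adjacency matrix of `G` (with multiplicity). -/
theorem mcclelland_equality_characterization
    (d : ℝ) (hd : 0 ≤ d) (n : ℕ) (hn : 1 ≤ n)
    (G : SimpleGraph (Fin n)) [DecidableRel G.Adj]
    (havg : (∑ v : Fin n, (G.degree v : ℝ)) ≤ d * n)
    (μ : Fin n → ℝ)
    (hchar : (G.adjMatrix ℝ).charpoly
      = ∏ i : Fin n, (Polynomial.X - Polynomial.C (μ i))) :
    (1 / (n : ℝ)) * ∑ i : Fin n, |μ i| = Real.sqrt d ↔
      ((∀ v w : Fin n, ¬ G.Adj v w) ∧ d = 0) ∨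
        ((∀ v : Fin n, G.degree v = 1) ∧ d = 1) := by
  classical
  have hA : (G.adjMatrix ℝ).IsHermitian := by
    rw [Matrix.IsHermitian, Matrix.conjTranspose_eq_transpose_of_trivial]
    exact G.isSymm_adjMatrix
  have hprod : ∏ i, ((X : ℝ[X]) - C (hA.eigenvalues i)) = ∏ i, ((X : ℝ[X]) - C (μ i)) := by
    rw [← my_charpoly_herm _ hA, hchar]
  have hms : Finset.univ.val.map hA.eigenvalues = Finset.univ.val.map μ :=
    my_multiset_eq _ _ hprod
  have habs : ∑ i, |μ i| = ∑ i, |hA.eigenvalues i| :=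
    (my_sum_transfer _ _ hms (fun x => |x|)).symm
  have hsq : ∑ i, (μ i) ^ 2 = ∑ i, hA.eigenvalues i ^ 2 :=
    (my_sum_transfer _ _ hms (fun x => x ^ 2)).symm
  have htrace : Matrix.trace (G.adjMatrix ℝ * G.adjMatrix ℝ) = ∑ v, (G.degree v : ℝ) := by
    rw [Matrix.trace]
    refine Finset.sum_congr rfl fun v _ => ?_
    exact G.adjMatrix_mul_self_apply_self v
  have hS2 : ∑ i, (μ i) ^ 2 = ∑ v, (G.degree v : ℝ) := by
    rw [hsq, ← my_trace_eq _ hA, htrace]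
  have hNpos : (0 : ℝ) < n := by exact_mod_cast hn
  have hNne : (n : ℝ) ≠ 0 := ne_of_gt hNpos
  have hadjnn : ∀ a b : Fin n, (0 : ℝ) ≤ G.adjMatrix ℝ a b := by
    intro a b; rw [SimpleGraph.adjMatrix_apply]; split <;> norm_num
  constructor
  · intro h
    have hsum : ∑ i, |μ i| = n * Real.sqrt d := by
      calc ∑ i, |μ i| = (n : ℝ) * ((1 / n) * ∑ i, |μ i|) := by field_simp
        _ = n * Real.sqrt d := by rw [h]
    have hexp : ∀ i ∈ Finset.univ, (|μ i| - Real.sqrt d) ^ 2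
        = μ i ^ 2 - 2 * Real.sqrt d * |μ i| + d := by
      intro i _
      have h2 := sq_abs (μ i)
      have h3 := Real.sq_sqrt hd
      nlinarith
    have hTle : ∑ i, (|μ i| - Real.sqrt d) ^ 2 ≤ 0 := by
      rw [Finset.sum_congr rfl hexp, Finset.sum_add_distrib, Finset.sum_sub_distrib,
        ← Finset.mul_sum, Finset.sum_const, Finset.card_univ, Fintype.card_fin,
        nsmul_eq_mul, hsum, hS2]
      nlinarith [Real.mul_self_sqrt hd, havg]
    have hTzero : ∀ i ∈ Finset.univ, (|μ i| - Real.sqrt d) ^ 2 = 0 :=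
      (Finset.sum_eq_zero_iff_of_nonneg (fun i _ => sq_nonneg _)).mp
        (le_antisymm hTle (Finset.sum_nonneg fun i _ => sq_nonneg _))
    have habsd : ∀ i, |μ i| = Real.sqrt d := by
      intro i
      have := sq_eq_zero_iff.mp (hTzero i (Finset.mem_univ i))
      linarith [sub_eq_zero.mp this]
    have hmu2 : ∀ i, μ i ^ 2 = d := by
      intro i; rw [← sq_abs, habsd i, Real.sq_sqrt hd]
    by_cases hd0 : d = 0
    · refine Or.inl ⟨?_, hd0⟩
      have hdegsum : ∑ v, (G.degree v : ℝ) = 0 := by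
        rw [← hS2]
        subst hd0
        exact Finset.sum_eq_zero fun i _ => hmu2 i
      have hdeg0 : ∀ v : Fin n, (G.degree v : ℝ) = 0 := by
        intro v
        have := (Finset.sum_eq_zero_iff_of_nonneg
          (fun v _ => by positivity)).mp hdegsum v (Finset.mem_univ v)
        exact this
      intro v w hvw
      have hwmem : w ∈ G.neighborFinset v := (SimpleGraph.mem_neighborFinset G v w).mpr hvw
      have : 0 < G.degree v := Finset.card_pos.mpr ⟨w, hwmem⟩
      have : (0 : ℝ) < (G.degree v : ℝ) := by exact_mod_cast this
      rw [hdeg0 v] at this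
      exact lt_irrefl 0 this
    · have hdpos : 0 < d := lt_of_le_of_ne hd (Ne.symm hd0)
      have hev2 : ∀ i, hA.eigenvalues i ^ 2 = d := by
        intro i
        have hmem : hA.eigenvalues i ∈ Finset.univ.val.map μ := by
          rw [← hms]
          exact Multiset.mem_map_of_mem _ (Finset.mem_val.mpr (Finset.mem_univ i))
        obtain ⟨j, -, hj⟩ := Multiset.mem_map.mp hmem
        rw [← hj]; exact hmu2 j
      have hAA : G.adjMatrix ℝ * G.adjMatrix ℝ = d • 1 :=
        my_mul_self_eq_smul_one _ hA d hev2
      have hdeg : ∀ v : Fin n, (G.degree v : ℝ) = d := by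
        intro v
        have h1 := congrArg (fun M : Matrix (Fin n) (Fin n) ℝ => M v v) hAA
        simp only [Matrix.smul_apply, Matrix.one_apply_eq, smul_eq_mul, mul_one] at h1
        rw [G.adjMatrix_mul_self_apply_self v] at h1
        exact h1
      have hoff : ∀ v w : Fin n, v ≠ w → ∀ x : Fin n,
          G.adjMatrix ℝ v x * G.adjMatrix ℝ x w = 0 := by
        intro v w hvw x
        have h0 : (G.adjMatrix ℝ * G.adjMatrix ℝ) v w = 0 := by
          rw [hAA]
          simp [Matrix.smul_apply, Matrix.one_apply_ne hvw]
        rw [Matrix.mul_apply] at h0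
        exact (Finset.sum_eq_zero_iff_of_nonneg
          (fun y _ => mul_nonneg (hadjnn v y) (hadjnn y w))).mp h0 x (Finset.mem_univ x)
      have hdeg1 : ∀ v : Fin n, G.degree v = 1 := by
        intro v
        have hpos : 0 < G.degree v := by
          by_contra hcon
          push_neg at hcon
          interval_cases h : G.degree v
          · have := hdeg v; rw [h] at this; simp at this; exact hd0 this.symm
        have hle : G.degree v ≤ 1 := by
          by_contra hcon
          push_neg at hcon
          obtain ⟨a, ha, b, hb, hab⟩ := Finset.one_lt_card.mp hcon
          rw [SimpleGraph.mem_neighborFinset] at ha hb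
          have := hoff a b hab v
          rw [SimpleGraph.adjMatrix_apply, SimpleGraph.adjMatrix_apply] at this
          rw [if_pos (G.adj_symm ha), if_pos hb] at this
          norm_num at this
        omega
      refine Or.inr ⟨hdeg1, ?_⟩
      have := hdeg ⟨0, hn⟩
      rw [hdeg1 ⟨0, hn⟩] at this
      simpa using this.symm
  · rintro (⟨hempty, rfl⟩ | ⟨hmatch, rfl⟩)
    · rw [Real.sqrt_zero]
      have hdeg0 : ∀ v : Fin n, (G.degree v : ℝ) = 0 := by
        intro v
        have : G.neighborFinset v = ∅ :=
          Finset.eq_empty_of_forall_notMem fun w hw =>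
            hempty v w ((SimpleGraph.mem_neighborFinset G v w).mp hw)
        simp [SimpleGraph.degree, this]
      have hsq0 : ∑ i, (μ i) ^ 2 = 0 := by
        rw [hS2]; exact Finset.sum_eq_zero fun v _ => hdeg0 v
      have hmu0 : ∀ i, μ i = 0 := by
        intro i
        have := (Finset.sum_eq_zero_iff_of_nonneg (fun i _ => sq_nonneg (μ i))).mp
          hsq0 i (Finset.mem_univ i)
        exact pow_eq_zero_iff (by norm_num) |>.mp this
      rw [Finset.sum_eq_zero fun i _ => by rw [hmu0 i, abs_zero]]
      ring
    · rw [Real.sqrt_one]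
      have hAA : G.adjMatrix ℝ * G.adjMatrix ℝ = 1 := by
        ext v w
        by_cases hvw : v = w
        · subst hvw
          rw [G.adjMatrix_mul_self_apply_self v, Matrix.one_apply_eq, hmatch v]
          norm_num
        · rw [Matrix.mul_apply, Matrix.one_apply_ne hvw]
          refine Finset.sum_eq_zero fun x _ => ?_
          by_cases h1 : G.Adj v x
          · by_cases h2 : G.Adj x w
            · exfalso
              have hv : v ∈ G.neighborFinset x := (SimpleGraph.mem_neighborFinset G x v).mpr (G.adj_symm h1)
              have hw : w ∈ G.neighborFinset x := (SimpleGraph.mem_neighborFinset G x w).mpr h2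
              have : 1 < G.degree x := Finset.one_lt_card.mpr ⟨v, hv, w, hw, hvw⟩
              rw [hmatch x] at this
              exact lt_irrefl 1 this
            · simp [SimpleGraph.adjMatrix_apply, h2]
          · simp [SimpleGraph.adjMatrix_apply, h1]
      have hev2 : ∀ i, hA.eigenvalues i ^ 2 = 1 :=
        my_sq_one_of_mul_self_eq_one _ hA hAA
      have hevabs : ∀ i, |hA.eigenvalues i| = 1 := by
        intro i
        have h1 : (hA.eigenvalues i - 1) * (hA.eigenvalues i + 1) = 0 := by
          have := hev2 i; nlinarith
        rcases mul_eq_zero.mp h1 with h | h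
        · rw [show hA.eigenvalues i = 1 by linarith]; norm_num
        · rw [show hA.eigenvalues i = -1 by linarith]; norm_num
      rw [habs, Finset.sum_congr rfl fun i _ => hevabs i, Finset.sum_const,
        Finset.card_univ, Fintype.card_fin, nsmul_eq_mul, mul_one]
      field_simp
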